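/- If O is a trace-class operator on L²(ℝᵈ), then the second quantization dΓ_F(O) extends to a bounded operator on fermionic Fock space with ‖dΓ_F(O)Ψ‖ ≤ ‖O‖_{Tr} ‖Ψ‖ for all Ψ. -/

import Mathlib

/-- If `O` is a trace-class operator on the one-particle space, given by a
singular value decomposition `O = Σᵢ sᵢ |φᵢ⟩⟨ψᵢ|` with `sᵢ ≥ 0`, orthonormal families
`(ψᵢ)`, `(φᵢ)` and trace norm `‖O‖_Tr = Σᵢ sᵢ = T`, then the second quantization
`dΓ_F(O) = Σᵢ a*(O eᵢ) a(eᵢ)` extends to a bounded operator on fermionic Fock space with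
`‖dΓ_F(O)Ψ‖ ≤ ‖O‖_Tr ‖Ψ‖` for all `Ψ`. -/
theorem fermionic_second_quantization_traceClass_estimate
    {H F : Type*}
    [NormedAddCommGroup H] [InnerProductSpace ℂ H] [CompleteSpace H]
    [NormedAddCommGroup F] [InnerProductSpace ℂ F] [CompleteSpace F]
    (a astar : H → F →L[ℂ] F)
    (h_adjoint : ∀ f, astar f = ContinuousLinearMap.adjoint (a f))
    (h_CAR : ∀ f g x, a f (astar g x) + astar g (a f x) = (inner ℂ f g : ℂ) • x)
    (h_CAR' : ∀ f g x, a f (a g x) + a g (a f x) = 0)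
    (e : ℕ → H) (he : Orthonormal ℂ e)
    (he' : (Submodule.span ℂ (Set.range e)).topologicalClosure = ⊤)
    (O : H →L[ℂ] H)
    (s : ℕ → ℝ) (hs : ∀ i, 0 ≤ s i) (T : ℝ) (hT : HasSum s T)
    (ψv φv : ℕ → H) (hψ : Orthonormal ℂ ψv) (hφ : Orthonormal ℂ φv)
    (hO : ∀ x, HasSum (fun i => (s i : ℂ) • ((inner ℂ (ψv i) x : ℂ) • φv i)) (O x))
    (dΓO : F →ₗ[ℂ] F)
    (hdΓ : ∀ Ψ : F, HasSum (fun i => astar (O (e i)) (a (e i) Ψ)) (dΓO Ψ)) :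
    ∀ Ψ : F, ‖dΓO Ψ‖ ≤ T * ‖Ψ‖ := by
  classical
  have hA1 : ∀ (f : H) (x y : F), (inner ℂ x (astar f y) : ℂ) = inner ℂ (a f x) y := by
    intro f x y; rw [h_adjoint f]; exact ContinuousLinearMap.adjoint_inner_right _ _ _
  have hA2 : ∀ (f : H) (x y : F), (inner ℂ (astar f x) y : ℂ) = inner ℂ x (a f y) := by
    intro f x y; rw [h_adjoint f]; exact ContinuousLinearMap.adjoint_inner_left _ _ _
  -- norm identity
  have hnorm : ∀ (f : H) (x : F), ‖a f x‖ ^ 2 + ‖astar f x‖ ^ 2 = ‖f‖ ^ 2 * ‖x‖ ^ 2 := by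
    intro f x
    have h := congrArg (fun y => (inner ℂ x y : ℂ)) (h_CAR f f x)
    simp only [inner_add_right, inner_smul_right] at h
    rw [← hA2 f x (astar f x), hA1 f x (a f x), inner_self_eq_norm_sq_to_K,
      inner_self_eq_norm_sq_to_K, inner_self_eq_norm_sq_to_K, inner_self_eq_norm_sq_to_K] at h
    have hr : ‖astar f x‖ ^ 2 + ‖a f x‖ ^ 2 = ‖f‖ ^ 2 * ‖x‖ ^ 2 := by exact_mod_cast h
    linarith
  have ha_le : ∀ (f : H) (x : F), ‖a f x‖ ≤ ‖f‖ * ‖x‖ := by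
    intro f x
    nlinarith [hnorm f x, norm_nonneg (a f x), norm_nonneg (astar f x), norm_nonneg f,
      norm_nonneg x, sq_nonneg (‖f‖ * ‖x‖ - ‖a f x‖), mul_nonneg (norm_nonneg f) (norm_nonneg x)]
  have hvanish : ∀ D : F →L[ℂ] F,
      (∀ x, ContinuousLinearMap.adjoint D (D x) + D (ContinuousLinearMap.adjoint D x) = 0) →
      ∀ x, D x = 0 := by
    intro D hD x
    have h := congrArg (fun y => (inner ℂ x y : ℂ)) (hD x)
    simp only [inner_add_right, inner_zero_right] at h
    have h1 : (inner ℂ x (ContinuousLinearMap.adjoint D (D x)) : ℂ) = (‖D x‖ : ℂ) ^ 2 := by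
      rw [ContinuousLinearMap.adjoint_inner_right]; exact inner_self_eq_norm_sq_to_K (𝕜 := ℂ) (D x)
    have h2 : (inner ℂ x (D (ContinuousLinearMap.adjoint D x)) : ℂ)
        = (‖ContinuousLinearMap.adjoint D x‖ : ℂ) ^ 2 := by
      rw [← ContinuousLinearMap.adjoint_inner_left D (ContinuousLinearMap.adjoint D x) x]
      exact inner_self_eq_norm_sq_to_K (𝕜 := ℂ) (ContinuousLinearMap.adjoint D x)
    rw [h1, h2] at h
    have hr : ‖D x‖ ^ 2 + ‖ContinuousLinearMap.adjoint D x‖ ^ 2 = 0 := by exact_mod_cast h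
    have : ‖D x‖ = 0 := by nlinarith [norm_nonneg (D x), norm_nonneg (ContinuousLinearMap.adjoint D x)]
    simpa using this
  -- key linearity lemma for astar
  have hkey : ∀ (u g₁ g₂ : H) (c₁ c₂ : ℂ),
      (∀ f : H, (inner ℂ f u : ℂ) = c₁ * inner ℂ f g₁ + c₂ * inner ℂ f g₂) →
      ∀ x, astar u x = c₁ • astar g₁ x + c₂ • astar g₂ x := by
    intro u g₁ g₂ c₁ c₂ hu
    set D : F →L[ℂ] F := astar u - c₁ • astar g₁ - c₂ • astar g₂ with hDdef
    have hDapp : ∀ x, D x = astar u x - c₁ • astar g₁ x - c₂ • astar g₂ x := by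
      intro x; simp [hDdef]
    have hanti : ∀ (f : H) (x : F), a f (D x) = - D (a f x) := by
      intro f x
      have e1 : a f (astar u x) = (inner ℂ f u : ℂ) • x - astar u (a f x) :=
        eq_sub_of_add_eq (h_CAR f u x)
      have e2 : a f (astar g₁ x) = (inner ℂ f g₁ : ℂ) • x - astar g₁ (a f x) :=
        eq_sub_of_add_eq (h_CAR f g₁ x)
      have e3 : a f (astar g₂ x) = (inner ℂ f g₂ : ℂ) • x - astar g₂ (a f x) :=
        eq_sub_of_add_eq (h_CAR f g₂ x)
      rw [hDapp x, map_sub, map_sub, map_smul, map_smul, e1, e2, e3, hDapp (a f x), hu f]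
      module
    have hDadj : ContinuousLinearMap.adjoint D
        = a u - (starRingEnd ℂ c₁) • a g₁ - (starRingEnd ℂ c₂) • a g₂ := by
      rw [hDdef, map_sub, map_sub, map_smulₛₗ, map_smulₛₗ, h_adjoint, h_adjoint, h_adjoint,
        ContinuousLinearMap.adjoint_adjoint, ContinuousLinearMap.adjoint_adjoint,
        ContinuousLinearMap.adjoint_adjoint]
    have hD0 : ∀ x, D x = 0 := by
      apply hvanish
      intro x
      have hadjapp : ∀ y, ContinuousLinearMap.adjoint D y
          = a u y - (starRingEnd ℂ c₁) • a g₁ y - (starRingEnd ℂ c₂) • a g₂ y := by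
        intro y; rw [hDadj]; simp
      rw [hadjapp (D x), hadjapp x, hanti u x, hanti g₁ x, hanti g₂ x,
        map_sub, map_sub, map_smul, map_smul]
      module
    intro x
    have h0 := hD0 x
    rw [hDapp x, sub_sub] at h0
    exact sub_eq_zero.mp h0
  have hkeyCLM : ∀ (u g₁ g₂ : H) (c₁ c₂ : ℂ),
      (∀ f : H, (inner ℂ f u : ℂ) = c₁ * inner ℂ f g₁ + c₂ * inner ℂ f g₂) →
      astar u = c₁ • astar g₁ + c₂ • astar g₂ := fun u g₁ g₂ c₁ c₂ hu =>
    ContinuousLinearMap.ext fun x => by rw [hkey u g₁ g₂ c₁ c₂ hu x]; simp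
  have ha_comb : ∀ (u g₁ g₂ : H) (c₁ c₂ : ℂ),
      (∀ f : H, (inner ℂ f u : ℂ) = c₁ * inner ℂ f g₁ + c₂ * inner ℂ f g₂) →
      ∀ x, a u x = (starRingEnd ℂ c₁) • a g₁ x + (starRingEnd ℂ c₂) • a g₂ x := by
    intro u g₁ g₂ c₁ c₂ hu x
    have h1 : a u = ContinuousLinearMap.adjoint (astar u) := by
      rw [h_adjoint, ContinuousLinearMap.adjoint_adjoint]
    rw [h1, hkeyCLM u g₁ g₂ c₁ c₂ hu, map_add, map_smulₛₗ, map_smulₛₗ, h_adjoint g₁, h_adjoint g₂,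
      ContinuousLinearMap.adjoint_adjoint, ContinuousLinearMap.adjoint_adjoint]
    simp
  have ha_add : ∀ (f g : H) (x : F), a (f + g) x = a f x + a g x := by
    intro f g x
    have := ha_comb (f + g) f g 1 1 (fun f' => by simp [inner_add_right]) x
    simpa using this
  have ha_smul : ∀ (c : ℂ) (g : H) (x : F), a (c • g) x = (starRingEnd ℂ c) • a g x := by
    intro c g x
    have := ha_comb (c • g) g 0 c 0 (fun f' => by simp [inner_smul_right]) x
    simpa using this
  -- `f ↦ a f Χ` as a continuous real-linear map
  have aR : ∀ Χ : F, ∃ Tm : H →L[ℝ] F, ∀ f, Tm f = a f Χ := by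
    intro Χ
    refine ⟨LinearMap.mkContinuous
      { toFun := fun f => a f Χ
        map_add' := fun f g => ha_add f g Χ
        map_smul' := fun r f => ?_ } ‖Χ‖ (fun f => ?_), fun f => rfl⟩
    · show a (r • f) Χ = r • a f Χ
      rw [← Complex.coe_smul, ha_smul, Complex.conj_ofReal, Complex.coe_smul]
    · rw [mul_comm]; exact ha_le f Χ
  -- `x ↦ ⟪x, v⟫` as a continuous real-linear map
  have innerR : ∀ v : F, ∃ Lm : F →L[ℝ] ℂ, ∀ x, Lm x = (inner ℂ x v : ℂ) := by
    intro v
    refine ⟨LinearMap.mkContinuous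
      { toFun := fun x => (inner ℂ x v : ℂ)
        map_add' := fun x y => inner_add_left _ _ _
        map_smul' := fun r x => ?_ } ‖v‖ (fun x => ?_), fun x => rfl⟩
    · show (inner ℂ (r • x) v : ℂ) = r • (inner ℂ x v : ℂ)
      rw [← Complex.coe_smul, inner_smul_left, Complex.conj_ofReal, ← smul_eq_mul,
        Complex.coe_smul]
    · rw [mul_comm]; exact norm_inner_le_norm _ _
  -- orthonormal basis expansion
  have hx_exp : ∀ x : H, HasSum (fun i => (inner ℂ (e i) x : ℂ) • e i) x := by
    intro x
    have hb : ∀ i, (HilbertBasis.mk he he'.ge : HilbertBasis ℕ ℂ H) i = e i := fun i =>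
      congrFun (HilbertBasis.coe_mk he he'.ge) i
    have h0 := (HilbertBasis.mk he he'.ge).hasSum_repr x
    simp only [HilbertBasis.repr_apply_apply, hb] at h0
    exact h0
  -- the central estimate on matrix elements
  have main : ∀ Φ Ψ : F, ‖(inner ℂ Φ (dΓO Ψ) : ℂ)‖ ≤ T * (‖Φ‖ * ‖Ψ‖) := by
    intro Φ Ψ
    obtain ⟨TΦ, hTΦ⟩ := aR Φ
    obtain ⟨TΨ, hTΨ⟩ := aR Ψ
    set C : ℝ := ‖Φ‖ * ‖Ψ‖ with hC
    have hC0 : (0:ℝ) ≤ C := mul_nonneg (norm_nonneg _) (norm_nonneg _)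
    set t : ℕ → ℕ → ℂ := fun j i =>
      (s j : ℂ) * ((inner ℂ (ψv j) (e i) : ℂ) * (inner ℂ (a (φv j) Φ) (a (e i) Ψ) : ℂ)) with ht
    -- row sums (fixed j, summing over i)
    have hrow : ∀ j, HasSum (fun i => t j i)
        ((s j : ℂ) * (inner ℂ (a (φv j) Φ) (a (ψv j) Ψ) : ℂ)) := by
      intro j
      have h1 := (hx_exp (ψv j)).mapL TΨ
      simp only [hTΨ] at h1
      have h2 : ∀ i, a ((inner ℂ (e i) (ψv j) : ℂ) • e i) Ψ
          = (inner ℂ (ψv j) (e i) : ℂ) • a (e i) Ψ := by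
        intro i; rw [ha_smul, inner_conj_symm]
      simp only [h2] at h1
      have h3 := h1.mapL (innerSL ℂ (a (φv j) Φ))
      simp only [innerSL_apply_apply, inner_smul_right] at h3
      simpa [ht, mul_assoc] using h3.mul_left ((s j : ℂ))
    -- column sums (fixed i, summing over j)
    have hcol : ∀ i, HasSum (fun j => t j i)
        (inner ℂ (a (O (e i)) Φ) (a (e i) Ψ) : ℂ) := by
      intro i
      obtain ⟨Lm, hLm⟩ := innerR (a (e i) Ψ)
      have h1 := (hO (e i)).mapL TΦ
      simp only [hTΦ] at h1
      have h2 := h1.mapL Lm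
      simp only [hLm] at h2
      have h3 : ∀ j, (inner ℂ (a ((s j : ℂ) • ((inner ℂ (ψv j) (e i) : ℂ) • φv j)) Φ)
          (a (e i) Ψ) : ℂ) = t j i := by
        intro j
        rw [ha_smul, ha_smul, inner_smul_left, inner_smul_left]
        simp only [Complex.conj_conj, ht]
      simp only [h3] at h2
      exact h2
    -- total sum
    have htot : HasSum (fun i => (inner ℂ (a (O (e i)) Φ) (a (e i) Ψ) : ℂ))
        (inner ℂ Φ (dΓO Ψ) : ℂ) := by
      have h1 := (hdΓ Ψ).mapL (innerSL ℂ Φ)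
      simp only [innerSL_apply_apply, hA1] at h1
      exact h1
    -- Riesz representation of the column functional
    have hz : ∀ j : ℕ, ∃ z : H,
        (∀ f : H, (inner ℂ (a (φv j) Φ) (a f Ψ) : ℂ) = (starRingEnd ℂ) (inner ℂ z f : ℂ)) ∧
        ‖z‖ ≤ C := by
      intro j
      have hφn : ‖φv j‖ = 1 := hφ.1 j
      have hx0 : ‖a (φv j) Φ‖ ≤ ‖Φ‖ := by
        have := ha_le (φv j) Φ; rwa [hφn, one_mul] at this
      have hbound : ∀ f : H,
          ‖(starRingEnd ℂ) (inner ℂ (a (φv j) Φ) (a f Ψ) : ℂ)‖ ≤ C * ‖f‖ := by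
        intro f
        rw [RCLike.norm_conj]
        calc ‖(inner ℂ (a (φv j) Φ) (a f Ψ) : ℂ)‖ ≤ ‖a (φv j) Φ‖ * ‖a f Ψ‖ :=
              norm_inner_le_norm _ _
          _ ≤ ‖Φ‖ * (‖f‖ * ‖Ψ‖) :=
              mul_le_mul hx0 (ha_le f Ψ) (norm_nonneg _) (norm_nonneg _)
          _ = C * ‖f‖ := by rw [hC]; ring
      set L : H →L[ℂ] ℂ := LinearMap.mkContinuous
        { toFun := fun f => (starRingEnd ℂ) (inner ℂ (a (φv j) Φ) (a f Ψ) : ℂ)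
          map_add' := fun f g => by simp only [ha_add, inner_add_right, map_add]
          map_smul' := fun c f => by
            simp only [ha_smul, inner_smul_right, map_mul, Complex.conj_conj,
              RingHom.id_apply, smul_eq_mul] } C hbound with hL
      refine ⟨(InnerProductSpace.toDual ℂ H).symm L, fun f => ?_, ?_⟩
      · have h1 : (inner ℂ ((InnerProductSpace.toDual ℂ H).symm L) f : ℂ) = L f :=
          InnerProductSpace.toDual_symm_apply
        rw [h1]
        simp only [hL, LinearMap.mkContinuous_apply, LinearMap.coe_mk, AddHom.coe_mk,
          Complex.conj_conj]
      · have h2 : ‖(InnerProductSpace.toDual ℂ H).symm L‖ = ‖L‖ :=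
          LinearIsometryEquiv.norm_map _ _
        rw [h2, hL]
        exact LinearMap.mkContinuous_norm_le _ hC0 _
    choose z hz1 hz2 using hz
    -- norm of the summand
    have hnt : ∀ j i, ‖t j i‖
        = s j * (‖(inner ℂ (e i) (ψv j) : ℂ)‖ * ‖(inner ℂ (e i) (z j) : ℂ)‖) := by
      intro j i
      rw [ht]
      simp only [norm_mul, Complex.norm_real, Real.norm_eq_abs, abs_of_nonneg (hs j),
        hz1 j (e i), RCLike.norm_conj]
      rw [norm_inner_symm (ψv j) (e i), norm_inner_symm (z j) (e i)]
    have hb1 : ∀ j i, ‖t j i‖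
        ≤ s j * ((‖(inner ℂ (e i) (ψv j) : ℂ)‖ ^ 2 + ‖(inner ℂ (e i) (z j) : ℂ)‖ ^ 2) / 2) := by
      intro j i
      rw [hnt j i]
      refine mul_le_mul_of_nonneg_left ?_ (hs j)
      nlinarith [sq_nonneg (‖(inner ℂ (e i) (ψv j) : ℂ)‖ - ‖(inner ℂ (e i) (z j) : ℂ)‖)]
    have hsum2 : ∀ j, Summable (fun i =>
        s j * ((‖(inner ℂ (e i) (ψv j) : ℂ)‖ ^ 2 + ‖(inner ℂ (e i) (z j) : ℂ)‖ ^ 2) / 2)) := by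
      intro j
      exact (((he.inner_products_summable (x := ψv j)).add
        (he.inner_products_summable (x := z j))).div_const 2).mul_left (s j)
    have hsumrow : ∀ j, Summable (fun i => ‖t j i‖) := fun j =>
      Summable.of_nonneg_of_le (fun i => norm_nonneg _) (hb1 j) (hsum2 j)
    set K : ℝ := (1 + C ^ 2) / 2 with hK
    have hrowsum_le : ∀ j, ∑' i, ‖t j i‖ ≤ s j * K := by
      intro j
      have hB1 : ∑' i, ‖(inner ℂ (e i) (ψv j) : ℂ)‖ ^ 2 ≤ 1 := by
        have := he.tsum_inner_products_le (ψv j)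
        rwa [hψ.1 j, one_pow] at this
      have hB2 : ∑' i, ‖(inner ℂ (e i) (z j) : ℂ)‖ ^ 2 ≤ C ^ 2 := by
        calc ∑' i, ‖(inner ℂ (e i) (z j) : ℂ)‖ ^ 2 ≤ ‖z j‖ ^ 2 := he.tsum_inner_products_le (z j)
          _ ≤ C ^ 2 := by nlinarith [norm_nonneg (z j), hz2 j]
      calc ∑' i, ‖t j i‖
          ≤ ∑' i, s j * ((‖(inner ℂ (e i) (ψv j) : ℂ)‖ ^ 2 + ‖(inner ℂ (e i) (z j) : ℂ)‖ ^ 2) / 2) :=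
            Summable.tsum_le_tsum (hb1 j) (hsumrow j) (hsum2 j)
        _ = s j * ((∑' i, ‖(inner ℂ (e i) (ψv j) : ℂ)‖ ^ 2
              + ∑' i, ‖(inner ℂ (e i) (z j) : ℂ)‖ ^ 2) / 2) := by
            rw [tsum_mul_left, tsum_div_const,
              Summable.tsum_add (he.inner_products_summable (x := ψv j))
                (he.inner_products_summable (x := z j))]
        _ ≤ s j * K := by
            rw [hK]
            refine mul_le_mul_of_nonneg_left ?_ (hs j)
            linarith
    have hfull : Summable (fun p : ℕ × ℕ => ‖t p.1 p.2‖) := by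
      refine (summable_prod_of_nonneg (fun p => norm_nonneg _)).2 ⟨fun j => hsumrow j, ?_⟩
      exact Summable.of_nonneg_of_le (fun j => tsum_nonneg fun i => norm_nonneg _) hrowsum_le
        (hT.summable.mul_right K)
    have hsummC : Summable (fun p : ℕ × ℕ => t p.1 p.2) := hfull.of_norm
    have hswap : ∑' i, ∑' j, t j i = ∑' j, ∑' i, t j i :=
      Summable.tsum_comm' hsummC (fun j => (hrow j).summable) (fun i => (hcol i).summable)
    have hv1 : ∑' i, ∑' j, t j i = (inner ℂ Φ (dΓO Ψ) : ℂ) := by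
      rw [tsum_congr (fun i => (hcol i).tsum_eq)]
      exact htot.tsum_eq
    have hv2 : ∑' j, ∑' i, t j i
        = ∑' j, (s j : ℂ) * (inner ℂ (a (φv j) Φ) (a (ψv j) Ψ) : ℂ) :=
      tsum_congr fun j => (hrow j).tsum_eq
    have hterm : ∀ j, ‖(s j : ℂ) * (inner ℂ (a (φv j) Φ) (a (ψv j) Ψ) : ℂ)‖ ≤ s j * C := by
      intro j
      rw [norm_mul, Complex.norm_real, Real.norm_eq_abs, abs_of_nonneg (hs j)]
      refine mul_le_mul_of_nonneg_left ?_ (hs j)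
      have h1 : ‖a (φv j) Φ‖ ≤ ‖Φ‖ := by
        have := ha_le (φv j) Φ; rwa [hφ.1 j, one_mul] at this
      have h2 : ‖a (ψv j) Ψ‖ ≤ ‖Ψ‖ := by
        have := ha_le (ψv j) Ψ; rwa [hψ.1 j, one_mul] at this
      calc ‖(inner ℂ (a (φv j) Φ) (a (ψv j) Ψ) : ℂ)‖ ≤ ‖a (φv j) Φ‖ * ‖a (ψv j) Ψ‖ :=
            norm_inner_le_norm _ _
        _ ≤ C := by rw [hC]; exact mul_le_mul h1 h2 (norm_nonneg _) (norm_nonneg _)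
    have hnsum : Summable (fun j => ‖(s j : ℂ) * (inner ℂ (a (φv j) Φ) (a (ψv j) Ψ) : ℂ)‖) :=
      Summable.of_nonneg_of_le (fun j => norm_nonneg _) hterm (hT.summable.mul_right C)
    calc ‖(inner ℂ Φ (dΓO Ψ) : ℂ)‖
        = ‖∑' j, (s j : ℂ) * (inner ℂ (a (φv j) Φ) (a (ψv j) Ψ) : ℂ)‖ := by
          rw [← hv2, ← hswap, hv1]
      _ ≤ ∑' j, ‖(s j : ℂ) * (inner ℂ (a (φv j) Φ) (a (ψv j) Ψ) : ℂ)‖ :=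
          norm_tsum_le_tsum_norm hnsum
      _ ≤ ∑' j, s j * C := Summable.tsum_le_tsum hterm hnsum (hT.summable.mul_right C)
      _ = T * C := by rw [tsum_mul_right, hT.tsum_eq]
  intro Ψ
  rcases eq_or_ne (dΓO Ψ) 0 with h0 | h0
  · rw [h0, norm_zero]
    exact mul_nonneg (hT.nonneg hs) (norm_nonneg Ψ)
  · have h := main (dΓO Ψ) Ψ
    have hh : ‖(inner ℂ (dΓO Ψ) (dΓO Ψ) : ℂ)‖ = ‖dΓO Ψ‖ ^ 2 := by
      rw [inner_self_eq_norm_sq_to_K (𝕜 := ℂ)]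
      rw [norm_pow, RCLike.norm_ofReal, abs_norm]
    rw [hh] at h
    have hpos : 0 < ‖dΓO Ψ‖ := norm_pos_iff.mpr h0
    nlinarith [h, hpos]
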